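/- Let A₀, A₁, …, A_{n−1} be N×N matrices, each equal to either A_L or A_R, where A_L and A_R are identical in their last N−1 columns. Define M = A_{n−1}⋯A₁A₀ and P = I + A_{n−1} + A_{n−1}A_{n−2} + ⋯ + A_{n−1}⋯A₁. Then the matrices P·(I−A₀) and I−M differ at most in their first columns; equivalently, P·(I−A₀)·eⱼ = (I−M)·eⱼ for all j ≥ 2. -/

import Mathlib

open Matrix

/-- `M_S = A_{S_{n−1}} ⋯ A_{S_1} A_{S_0}`. -/
def wordProd {N n : ℕ} (A : Bool → Matrix (Fin N) (Fin N) ℝ)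
    (S : Fin n → Bool) : Matrix (Fin N) (Fin N) ℝ :=
  ((List.ofFn fun i => A (S i)).reverse).prod

/-- `P_S = I + A_{S_{n−1}} + A_{S_{n−1}}A_{S_{n−2}} + ⋯ + A_{S_{n−1}}⋯A_{S_1}`. -/
def wordP {N n : ℕ} (A : Bool → Matrix (Fin N) (Fin N) ℝ)
    (S : Fin n → Bool) : Matrix (Fin N) (Fin N) ℝ :=
  ∑ k ∈ Finset.range n, (((List.ofFn fun i => A (S i)).reverse).take k).prod

/-- With each `Aᵢ ∈ {A_L, A_R}` (symbols `true = L`, `false = R`),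
`A_L, A_R` agreeing in their last `N−1` columns, the matrices `P·(I−A₀)` and
`I−M` agree in all columns except possibly the first. -/
theorem wordP_mul_sub_eq_cols {N n : ℕ} [NeZero N] [NeZero n]
    (AL AR : Matrix (Fin N) (Fin N) ℝ)
    (hcol : ∀ j : Fin N, j ≠ 0 → ∀ i : Fin N, AL i j = AR i j)
    (S : Fin n → Bool) (A : Bool → Matrix (Fin N) (Fin N) ℝ)
    (hA : A = fun s => if s then AL else AR) :
    ∀ j : Fin N, j ≠ 0 → ∀ i : Fin N,
      (wordP A S * (1 - A (S 0))) i j = (1 - wordProd A S) i j := by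
  intro j hj i
  have hcol' : ∀ s t : Bool, ∀ m : Fin N, A s m j = A t m j := by
    intro s t m
    cases s <;> cases t <;> simp [hA, hcol j hj m]
  set L := ((List.ofFn fun i => A (S i)).reverse) with hL
  have hlen : L.length = n := by simp [hL]
  have key : ∀ k, k < n → (((L.take k).prod) * A (S 0)) i j = (L.take (k+1)).prod i j := by
    intro k hk
    have hk' : k < L.length := hlen ▸ hk
    rw [List.prod_take_succ L k hk']
    have hmem : L[k] ∈ L := List.getElem_mem hk'
    have hmem2 : L[k] ∈ (List.ofFn fun i => A (S i)) := List.mem_reverse.1 hmem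
    obtain ⟨m, hm⟩ := List.mem_ofFn.1 hmem2
    simp only [Matrix.mul_apply]
    refine Finset.sum_congr rfl (fun m' _ => ?_)
    rw [← hm]
    rw [hcol' (S 0) (S m) m']
  have hP : (wordP A S * (1 - A (S 0))) i j
      = ∑ k ∈ Finset.range n, ((L.take k).prod i j - (L.take (k+1)).prod i j) := by
    rw [mul_sub, mul_one, Matrix.sub_apply]
    rw [wordP, Finset.sum_mul, Matrix.sum_apply, Matrix.sum_apply, ← Finset.sum_sub_distrib]
    refine Finset.sum_congr rfl (fun k hk => ?_)
    rw [key k (Finset.mem_range.1 hk)]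
  rw [hP, Finset.sum_range_sub' (fun k => (L.take k).prod i j) n]
  have h0 : (L.take 0).prod = 1 := by simp
  have hn : (L.take n).prod = L.prod := by rw [← hlen, List.take_length]
  rw [h0, hn, Matrix.sub_apply]
  rfl
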